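/- For a matrix M ∈ Θ parametrizing a GL(V)-orbit O_M on pairs of flags of the same multi-composition type, dim O_M = Σ m_{(i,j),(k,l)} · m_{(i',j'),(k',l')}, summed over quadruples with (i,j) > (i',j') or (k,l) > (k',l'). -/

import Mathlib

open Module

/-- A flag of type `c = (c_0, …, c_{s-1})` in `V`: a decreasing chain
`V = F_0 ⊇ F_1 ⊇ ⋯ ⊇ F_s = 0` with `dim (F_k / F_{k+1}) = c_k` (the parts of a
multi-composition, listed in the lexicographic order of their indices `(i,j)`). -/
def IsFlagOfType {V : Type} [AddCommGroup V] [Module ℂ V] {s : ℕ}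
    (c : Fin s → ℕ) (F : Fin (s + 1) → Submodule ℂ V) : Prop :=
  F 0 = ⊤ ∧ F (Fin.last s) = ⊥ ∧ (∀ k l, k ≤ l → F l ≤ F k) ∧
    ∀ k : Fin s, finrank ℂ (F k.castSucc) = finrank ℂ (F k.succ) + c k

/-- The relative position matrix of a pair of flags. -/
noncomputable def relPos {V : Type} [AddCommGroup V] [Module ℂ V] {s t : ℕ}
    (F : Fin (s + 1) → Submodule ℂ V) (F' : Fin (t + 1) → Submodule ℂ V)
    (k : Fin s) (l : Fin t) : ℕ :=
  finrank ℂ ((F k.succ ⊔ (F k.castSucc ⊓ F' l.castSucc)) : Submodule ℂ V)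
    - finrank ℂ ((F k.succ ⊔ (F k.castSucc ⊓ F' l.succ)) : Submodule ℂ V)

/-- The Lie algebra of the stabilizer of a pair of flags: endomorphisms
preserving every step of both flags. -/
def jointStab {V : Type} [AddCommGroup V] [Module ℂ V] {s t : ℕ}
    (F : Fin (s + 1) → Submodule ℂ V) (F' : Fin (t + 1) → Submodule ℂ V) :
    Submodule ℂ (Module.End ℂ V) where
  carrier := {x | (∀ k, ∀ v ∈ F k, x v ∈ F k) ∧ (∀ l, ∀ v ∈ F' l, x v ∈ F' l)}
  add_mem' := by
    intro x y hx hy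
    refine ⟨fun k v hv => ?_, fun l v hv => ?_⟩
    · simpa [LinearMap.add_apply] using (F k).add_mem (hx.1 k v hv) (hy.1 k v hv)
    · simpa [LinearMap.add_apply] using (F' l).add_mem (hx.2 l v hv) (hy.2 l v hv)
  zero_mem' := by
    refine ⟨fun k v hv => ?_, fun l v hv => ?_⟩
    · simp [LinearMap.zero_apply]
    · simp [LinearMap.zero_apply]
  smul_mem' := by
    intro a x hx
    refine ⟨fun k v hv => ?_, fun l v hv => ?_⟩
    · simpa [LinearMap.smul_apply] using (F k).smul_mem a (hx.1 k v hv)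
    · simpa [LinearMap.smul_apply] using (F' l).smul_mem a (hx.2 l v hv)

lemma exists_compl_of_le {V : Type} [AddCommGroup V] [Module ℂ V] [FiniteDimensional ℂ V]
    {X W : Submodule ℂ V} (hXW : X ≤ W) :
    ∃ U : Submodule ℂ V, U ≤ W ∧ U ⊔ X = W ∧
      finrank ℂ U + finrank ℂ X = finrank ℂ W := by
  obtain ⟨Y, hY⟩ := Submodule.exists_isCompl (X.comap W.subtype)
  have hXm : (X.comap W.subtype).map W.subtype = X := by
    rw [Submodule.map_comap_subtype, inf_eq_right.2 hXW]
  refine ⟨Y.map W.subtype, Submodule.map_subtype_le _ _, ?_, ?_⟩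
  · rw [← hXm, ← Submodule.map_sup, hY.symm.sup_eq_top, Submodule.map_subtype_top]
  · have hsup : (Y.map W.subtype) ⊔ X = W := by
      rw [← hXm, ← Submodule.map_sup, hY.symm.sup_eq_top, Submodule.map_subtype_top]
    have hinf : (Y.map W.subtype) ⊓ X = ⊥ := by
      rw [← hXm, ← Submodule.map_inf _ W.injective_subtype, hY.symm.inf_eq_bot,
        Submodule.map_bot]
    have := Submodule.finrank_sup_add_finrank_inf_eq (Y.map W.subtype) X
    rw [hsup, hinf] at this
    simpa using this.symm

section Main
variable {V : Type} [AddCommGroup V] [Module ℂ V] [FiniteDimensional ℂ V]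
  {s : ℕ} (F F' : Fin (s + 1) → Submodule ℂ V)

lemma relPos_key
    (hFm : ∀ k l : Fin (s+1), k ≤ l → F l ≤ F k)
    (hF'm : ∀ k l : Fin (s+1), k ≤ l → F' l ≤ F' k) (k l : Fin s) :
    relPos F F' k l + finrank ℂ ↥(F k.succ ⊓ F' l.castSucc)
        + finrank ℂ ↥(F k.castSucc ⊓ F' l.succ)
      = finrank ℂ ↥(F k.castSucc ⊓ F' l.castSucc) + finrank ℂ ↥(F k.succ ⊓ F' l.succ) := by
  have hinfXX : (F k.succ ⊓ F' l.castSucc) ⊓ (F k.castSucc ⊓ F' l.succ)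
      = F k.succ ⊓ F' l.succ := by
    apply le_antisymm
    · exact le_inf (inf_le_left.trans inf_le_left) (inf_le_right.trans inf_le_right)
    · exact le_inf (inf_le_inf le_rfl (hF'm _ _ l.castSucc_le_succ))
        (inf_le_inf (hFm _ _ k.castSucc_le_succ) le_rfl)
  have h2 := Submodule.finrank_sup_add_finrank_inf_eq
    (F k.succ ⊓ F' l.castSucc) (F k.castSucc ⊓ F' l.succ)
  rw [hinfXX] at h2
  have e1eq : F k.succ ⊓ (F k.castSucc ⊓ F' l.castSucc) = F k.succ ⊓ F' l.castSucc := by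
    rw [← inf_assoc, inf_eq_left.2 (hFm _ _ k.castSucc_le_succ)]
  have e2eq : F k.succ ⊓ (F k.castSucc ⊓ F' l.succ) = F k.succ ⊓ F' l.succ := by
    rw [← inf_assoc, inf_eq_left.2 (hFm _ _ k.castSucc_le_succ)]
  have h4 := Submodule.finrank_sup_add_finrank_inf_eq (F k.succ) (F k.castSucc ⊓ F' l.castSucc)
  have h5 := Submodule.finrank_sup_add_finrank_inf_eq (F k.succ) (F k.castSucc ⊓ F' l.succ)
  rw [e1eq] at h4
  rw [e2eq] at h5
  have h6 : finrank ℂ ((F k.succ ⊔ (F k.castSucc ⊓ F' l.succ)) : Submodule ℂ V)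
      ≤ finrank ℂ ((F k.succ ⊔ (F k.castSucc ⊓ F' l.castSucc)) : Submodule ℂ V) := by
    apply Submodule.finrank_mono
    exact sup_le_sup_left (inf_le_inf le_rfl (hF'm _ _ l.castSucc_le_succ)) _
  have h3 : finrank ℂ ((F k.succ ⊔ (F k.castSucc ⊓ F' l.castSucc)) : Submodule ℂ V)
      ≤ finrank ℂ ↥(F k.castSucc ⊓ F' l.castSucc) + finrank ℂ (F k.succ) := by
    omega
  unfold relPos
  omega


lemma flag_pair_exists_U
    (hFm : ∀ k l : Fin (s+1), k ≤ l → F l ≤ F k)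
    (hF'm : ∀ k l : Fin (s+1), k ≤ l → F' l ≤ F' k) :
    ∃ U : Fin s × Fin s → Submodule ℂ V,
      (∀ p, U p ≤ F p.1.castSucc ⊓ F' p.2.castSucc) ∧
      (∀ p, U p ⊔ ((F p.1.succ ⊓ F' p.2.castSucc) ⊔ (F p.1.castSucc ⊓ F' p.2.succ))
        = F p.1.castSucc ⊓ F' p.2.castSucc) ∧
      (∀ p, finrank ℂ (U p) = relPos F F' p.1 p.2) := by
  have hX : ∀ p : Fin s × Fin s,
      (F p.1.succ ⊓ F' p.2.castSucc) ⊔ (F p.1.castSucc ⊓ F' p.2.succ)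
        ≤ F p.1.castSucc ⊓ F' p.2.castSucc := by
    intro p
    refine sup_le (inf_le_inf ?_ le_rfl) (inf_le_inf le_rfl ?_)
    · exact hFm _ _ p.1.castSucc_le_succ
    · exact hF'm _ _ p.2.castSucc_le_succ
  choose U hUle hUsup hUdim using fun p => exists_compl_of_le (hX p)
  refine ⟨U, hUle, hUsup, fun p => ?_⟩
  obtain ⟨k, l⟩ := p
  have hinfXX : (F k.succ ⊓ F' l.castSucc) ⊓ (F k.castSucc ⊓ F' l.succ)
      = F k.succ ⊓ F' l.succ := by
    apply le_antisymm
    · exact le_inf (inf_le_left.trans inf_le_left) (inf_le_right.trans inf_le_right)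
    · exact le_inf (inf_le_inf le_rfl (hF'm _ _ l.castSucc_le_succ))
        (inf_le_inf (hFm _ _ k.castSucc_le_succ) le_rfl)
  have h2 := Submodule.finrank_sup_add_finrank_inf_eq
    (F k.succ ⊓ F' l.castSucc) (F k.castSucc ⊓ F' l.succ)
  rw [hinfXX] at h2
  have hkey := relPos_key F F' hFm hF'm k l
  have h1 := hUdim (k, l)
  dsimp only at h1 ⊢
  omega

lemma flag_pair_span
    (hFl : F (Fin.last s) = ⊥) (hF'l : F' (Fin.last s) = ⊥)
    (U : Fin s × Fin s → Submodule ℂ V)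
    (hUsup : ∀ p, U p ⊔ ((F p.1.succ ⊓ F' p.2.castSucc) ⊔ (F p.1.castSucc ⊓ F' p.2.succ))
        = F p.1.castSucc ⊓ F' p.2.castSucc)
    (a b : Fin (s+1)) :
    F a ⊓ F' b
      = ⨆ p : Fin s × Fin s, ⨆ (_ : (a:ℕ) ≤ (p.1:ℕ) ∧ (b:ℕ) ≤ (p.2:ℕ)), U p := by
  suffices h : ∀ N (a b : Fin (s+1)), 2*s ≤ N + a + b →
      F a ⊓ F' b
        = ⨆ p : Fin s × Fin s, ⨆ (_ : (a:ℕ) ≤ (p.1:ℕ) ∧ (b:ℕ) ≤ (p.2:ℕ)), U p by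
    exact h (2*s) a b (by omega)
  intro N
  induction N with
  | zero =>
    intro a b hab
    have has : (a:ℕ) = s := by have := a.isLt; have := b.isLt; omega
    have ha : a = Fin.last s := Fin.ext (by simpa using has)
    rw [ha, hFl, bot_inf_eq]
    symm
    rw [eq_bot_iff]
    refine iSup_le fun p => iSup_le fun hp => absurd hp.1 ?_
    have := p.1.isLt
    simp only [Fin.val_last]
    omega
  | succ N ih =>
    intro a b hab
    by_cases has : (a:ℕ) = s
    · have ha : a = Fin.last s := Fin.ext (by simpa using has)
      rw [ha, hFl, bot_inf_eq]
      symm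
      rw [eq_bot_iff]
      refine iSup_le fun p => iSup_le fun hp => absurd hp.1 ?_
      have := p.1.isLt
      simp only [Fin.val_last]
      omega
    by_cases hbs : (b:ℕ) = s
    · have hb : b = Fin.last s := Fin.ext (by simpa using hbs)
      rw [hb, hF'l, inf_bot_eq]
      symm
      rw [eq_bot_iff]
      refine iSup_le fun p => iSup_le fun hp => absurd hp.2 ?_
      have := p.2.isLt
      simp only [Fin.val_last]
      omega
    · have ha : (a:ℕ) < s := by have := a.isLt; omega
      have hb : (b:ℕ) < s := by have := b.isLt; omega
      have hac : (⟨(a:ℕ), ha⟩ : Fin s).castSucc = a := by ext; simp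
      have hbc : (⟨(b:ℕ), hb⟩ : Fin s).castSucc = b := by ext; simp
      have hsup0 := hUsup (⟨(a:ℕ), ha⟩, ⟨(b:ℕ), hb⟩)
      dsimp only at hsup0
      rw [hac, hbc] at hsup0
      have h1 := ih (⟨(a:ℕ), ha⟩ : Fin s).succ b
        (by simp only [Fin.val_succ]; omega)
      have h2 := ih a (⟨(b:ℕ), hb⟩ : Fin s).succ
        (by simp only [Fin.val_succ]; omega)
      rw [← hsup0, h1, h2]
      apply le_antisymm
      · refine sup_le ?_ (sup_le ?_ ?_)
        · exact le_iSup₂_of_le (⟨(a:ℕ), ha⟩, ⟨(b:ℕ), hb⟩) ⟨le_rfl, le_rfl⟩ le_rfl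
        · refine iSup₂_le fun p hp => le_iSup₂_of_le p ⟨?_, hp.2⟩ le_rfl
          have := hp.1
          simp only [Fin.val_succ] at this
          omega
        · refine iSup₂_le fun p hp => le_iSup₂_of_le p ⟨hp.1, ?_⟩ le_rfl
          have := hp.2
          simp only [Fin.val_succ] at this
          omega
      · refine iSup₂_le fun p hp => ?_
        obtain ⟨hp1, hp2⟩ := hp
        rcases eq_or_lt_of_le hp1 with h | h
        · rcases eq_or_lt_of_le hp2 with h' | h'
          · have hpe : p = (⟨(a:ℕ), ha⟩, ⟨(b:ℕ), hb⟩) := by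
              refine Prod.ext ?_ ?_
              · exact Fin.ext h.symm
              · exact Fin.ext h'.symm
            rw [hpe]
            exact le_sup_left
          · refine le_sup_of_le_right (le_sup_of_le_right
              (le_iSup₂_of_le p ⟨hp1, ?_⟩ le_rfl))
            simp only [Fin.val_succ]
            omega
        · refine le_sup_of_le_right (le_sup_of_le_left
            (le_iSup₂_of_le p ⟨?_, hp2⟩ le_rfl))
          simp only [Fin.val_succ]
          omega

noncomputable def Dfun (i j : ℕ) : ℤ :=
  (finrank ℂ ↥(F ⟨min i s, Nat.lt_succ_of_le (min_le_right _ _)⟩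
    ⊓ F' ⟨min j s, Nat.lt_succ_of_le (min_le_right _ _)⟩) : ℤ)

lemma Dfun_left_last (hFl : F (Fin.last s) = ⊥) (j : ℕ) : Dfun F F' s j = 0 := by
  unfold Dfun
  rw [show (⟨min s s, Nat.lt_succ_of_le (min_le_right _ _)⟩ : Fin (s+1)) = Fin.last s by
    ext; simp, hFl, bot_inf_eq]
  simp

lemma Dfun_right_last (hF'l : F' (Fin.last s) = ⊥) (i : ℕ) : Dfun F F' i s = 0 := by
  unfold Dfun
  rw [show (⟨min s s, Nat.lt_succ_of_le (min_le_right _ _)⟩ : Fin (s+1)) = Fin.last s by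
    ext; simp, hF'l, inf_bot_eq]
  simp

lemma Dfun_zero (hF0 : F 0 = ⊤) (hF'0 : F' 0 = ⊤) : Dfun F F' 0 0 = (finrank ℂ V : ℤ) := by
  unfold Dfun
  rw [show (⟨min 0 s, Nat.lt_succ_of_le (min_le_right _ _)⟩ : Fin (s+1)) = 0 by
    ext; simp, hF0, hF'0, inf_top_eq, finrank_top]

lemma Dfun_castSucc (k l : Fin s) :
    Dfun F F' k l = (finrank ℂ ↥(F k.castSucc ⊓ F' l.castSucc) : ℤ) := by
  unfold Dfun
  rw [show (⟨min (k:ℕ) s, Nat.lt_succ_of_le (min_le_right _ _)⟩ : Fin (s+1)) = k.castSucc by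
    ext; simp [Nat.min_eq_left (le_of_lt k.isLt)],
    show (⟨min (l:ℕ) s, Nat.lt_succ_of_le (min_le_right _ _)⟩ : Fin (s+1)) = l.castSucc by
    ext; simp [Nat.min_eq_left (le_of_lt l.isLt)]]

lemma Dfun_succ_castSucc (k l : Fin s) :
    Dfun F F' ((k:ℕ)+1) l = (finrank ℂ ↥(F k.succ ⊓ F' l.castSucc) : ℤ) := by
  unfold Dfun
  rw [show (⟨min ((k:ℕ)+1) s, Nat.lt_succ_of_le (min_le_right _ _)⟩ : Fin (s+1)) = k.succ by
    ext; simp [Nat.min_eq_left k.isLt],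
    show (⟨min (l:ℕ) s, Nat.lt_succ_of_le (min_le_right _ _)⟩ : Fin (s+1)) = l.castSucc by
    ext; simp [Nat.min_eq_left (le_of_lt l.isLt)]]

lemma Dfun_castSucc_succ (k l : Fin s) :
    Dfun F F' k ((l:ℕ)+1) = (finrank ℂ ↥(F k.castSucc ⊓ F' l.succ) : ℤ) := by
  unfold Dfun
  rw [show (⟨min (k:ℕ) s, Nat.lt_succ_of_le (min_le_right _ _)⟩ : Fin (s+1)) = k.castSucc by
    ext; simp [Nat.min_eq_left (le_of_lt k.isLt)],
    show (⟨min ((l:ℕ)+1) s, Nat.lt_succ_of_le (min_le_right _ _)⟩ : Fin (s+1)) = l.succ by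
    ext; simp [Nat.min_eq_left l.isLt]]

lemma Dfun_succ_succ (k l : Fin s) :
    Dfun F F' ((k:ℕ)+1) ((l:ℕ)+1) = (finrank ℂ ↥(F k.succ ⊓ F' l.succ) : ℤ) := by
  unfold Dfun
  rw [show (⟨min ((k:ℕ)+1) s, Nat.lt_succ_of_le (min_le_right _ _)⟩ : Fin (s+1)) = k.succ by
    ext; simp [Nat.min_eq_left k.isLt],
    show (⟨min ((l:ℕ)+1) s, Nat.lt_succ_of_le (min_le_right _ _)⟩ : Fin (s+1)) = l.succ by
    ext; simp [Nat.min_eq_left l.isLt]]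

lemma relPos_sum
    (hF0 : F 0 = ⊤) (hFl : F (Fin.last s) = ⊥)
    (hFm : ∀ k l : Fin (s+1), k ≤ l → F l ≤ F k)
    (hF'0 : F' 0 = ⊤) (hF'l : F' (Fin.last s) = ⊥)
    (hF'm : ∀ k l : Fin (s+1), k ≤ l → F' l ≤ F' k) :
    ∑ p : Fin s × Fin s, relPos F F' p.1 p.2 = finrank ℂ V := by
  have hstep : ∀ k l : Fin s, (relPos F F' k l : ℤ)
      = (Dfun F F' k l - Dfun F F' ((k:ℕ)+1) l)
        - (Dfun F F' k ((l:ℕ)+1) - Dfun F F' ((k:ℕ)+1) ((l:ℕ)+1)) := by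
    intro k l
    have hkey := relPos_key F F' hFm hF'm k l
    rw [Dfun_castSucc, Dfun_succ_castSucc, Dfun_castSucc_succ, Dfun_succ_succ]
    omega
  have main : ∑ p : Fin s × Fin s, (relPos F F' p.1 p.2 : ℤ) = (finrank ℂ V : ℤ) := by
    rw [Fintype.sum_prod_type]
    have inner : ∀ k : Fin s, ∑ l : Fin s, (relPos F F' k l : ℤ)
        = (Dfun F F' k 0 - Dfun F F' ((k:ℕ)+1) 0) := by
      intro k
      calc ∑ l : Fin s, (relPos F F' k l : ℤ)
          = ∑ l : Fin s, ((fun j => Dfun F F' k j - Dfun F F' ((k:ℕ)+1) j) (l:ℕ)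
              - (fun j => Dfun F F' k j - Dfun F F' ((k:ℕ)+1) j) ((l:ℕ)+1)) :=
            Finset.sum_congr rfl fun l _ => hstep k l
        _ = ∑ l ∈ Finset.range s, ((fun j => Dfun F F' k j - Dfun F F' ((k:ℕ)+1) j) l
              - (fun j => Dfun F F' k j - Dfun F F' ((k:ℕ)+1) j) (l+1)) :=
            Fin.sum_univ_eq_sum_range
              (fun j => (fun j' => Dfun F F' k j' - Dfun F F' ((k:ℕ)+1) j') j
                - (fun j' => Dfun F F' k j' - Dfun F F' ((k:ℕ)+1) j') (j+1)) s
        _ = (Dfun F F' k 0 - Dfun F F' ((k:ℕ)+1) 0)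
              - (Dfun F F' k s - Dfun F F' ((k:ℕ)+1) s) :=
            Finset.sum_range_sub' _ s
        _ = Dfun F F' k 0 - Dfun F F' ((k:ℕ)+1) 0 := by
            rw [Dfun_right_last F F' hF'l, Dfun_right_last F F' hF'l]; ring
    calc ∑ k : Fin s, ∑ l : Fin s, (relPos F F' k l : ℤ)
        = ∑ k : Fin s, ((fun i => Dfun F F' i 0) (k:ℕ) - (fun i => Dfun F F' i 0) ((k:ℕ)+1)) :=
          Finset.sum_congr rfl fun k _ => inner k
      _ = ∑ k ∈ Finset.range s, ((fun i => Dfun F F' i 0) k - (fun i => Dfun F F' i 0) (k+1)) :=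
          Fin.sum_univ_eq_sum_range
            (fun i => (fun i' => Dfun F F' i' 0) i - (fun i' => Dfun F F' i' 0) (i+1)) s
      _ = Dfun F F' 0 0 - Dfun F F' s 0 := Finset.sum_range_sub' _ s
      _ = (finrank ℂ V : ℤ) := by
          rw [Dfun_zero F F' hF0 hF'0, Dfun_left_last F F' hFl]; ring
  rw [← Nat.cast_sum] at main
  exact_mod_cast main

lemma flag_pair_basis
    (hF0 : F 0 = ⊤) (hFl : F (Fin.last s) = ⊥)
    (hFm : ∀ k l : Fin (s+1), k ≤ l → F l ≤ F k)
    (hF'0 : F' 0 = ⊤) (hF'l : F' (Fin.last s) = ⊥)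
    (hF'm : ∀ k l : Fin (s+1), k ≤ l → F' l ≤ F' k) :
    ∃ (n : Fin s × Fin s → ℕ) (B : Basis ((p : Fin s × Fin s) × Fin (n p)) ℂ V),
      (∀ p, n p = relPos F F' p.1 p.2) ∧
      (∀ a : Fin (s+1), F a = Submodule.span ℂ (⇑B '' {i | (a:ℕ) ≤ (i.1.1:ℕ)})) ∧
      (∀ b : Fin (s+1), F' b = Submodule.span ℂ (⇑B '' {i | (b:ℕ) ≤ (i.1.2:ℕ)})) := by
  obtain ⟨U, hUle, hUsup, hUdim⟩ := flag_pair_exists_U F F' hFm hF'm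
  have hspan := flag_pair_span F F' hFl hF'l U hUsup
  classical
  refine ⟨fun p => finrank ℂ (U p), ?_⟩
  let bU : (p : Fin s × Fin s) → Basis (Fin (finrank ℂ (U p))) ℂ ↥(U p) :=
    fun p => finBasis ℂ ↥(U p)
  let Bf : ((p : Fin s × Fin s) × Fin (finrank ℂ (U p))) → V := fun i => (bU i.1 i.2 : V)
  have hBf_mem : ∀ i, Bf i ∈ U i.1 := fun i => (bU i.1 i.2).2
  have hUeq : ∀ p, U p
      = Submodule.span ℂ (Set.range (fun j : Fin (finrank ℂ (U p)) => Bf ⟨p, j⟩)) := by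
    intro p
    have h1 : (bU p).span_eq = (bU p).span_eq := rfl
    have h3 : Submodule.map (U p).subtype (Submodule.span ℂ (Set.range ⇑(bU p))) = U p := by
      rw [(bU p).span_eq, Submodule.map_subtype_top]
    conv_lhs => rw [← h3]
    rw [Submodule.map_span, ← Set.range_comp]
    rfl
  have hcard : Fintype.card ((p : Fin s × Fin s) × Fin (finrank ℂ (U p))) = finrank ℂ V := by
    rw [Fintype.card_sigma]
    calc ∑ p : Fin s × Fin s, Fintype.card (Fin (finrank ℂ (U p)))
        = ∑ p : Fin s × Fin s, relPos F F' p.1 p.2 := by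
          refine Finset.sum_congr rfl fun p _ => ?_
          rw [Fintype.card_fin, hUdim p]
      _ = finrank ℂ V := relPos_sum F F' hF0 hFl hFm hF'0 hF'l hF'm
  have htop : ⊤ ≤ Submodule.span ℂ (Set.range Bf) := by
    have h00 := hspan 0 0
    rw [hF0, hF'0, top_inf_eq] at h00
    rw [h00]
    refine iSup₂_le fun p _ => ?_
    rw [hUeq p]
    refine Submodule.span_mono ?_
    rintro v ⟨j, rfl⟩
    exact ⟨⟨p, j⟩, rfl⟩
  let B := basisOfTopLeSpanOfCardEqFinrank Bf htop hcard
  have hBcoe : ⇑B = Bf := coe_basisOfTopLeSpanOfCardEqFinrank Bf htop hcard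
  refine ⟨B, fun p => hUdim p, ?_, ?_⟩
  · intro a
    have h := hspan a (0 : Fin (s+1))
    rw [hF'0, inf_top_eq] at h
    rw [h, hBcoe]
    apply le_antisymm
    · refine iSup₂_le fun p hp => ?_
      rw [hUeq p, Submodule.span_le]
      rintro v ⟨j, rfl⟩
      refine Submodule.subset_span ⟨⟨p, j⟩, ?_, rfl⟩
      exact hp.1
    · rw [Submodule.span_le]
      rintro v ⟨i, hi, rfl⟩
      exact (le_iSup₂_of_le (f := fun (p : Fin s × Fin s) (_ : (a:ℕ) ≤ (p.1:ℕ) ∧ ((0 : Fin (s+1)):ℕ) ≤ (p.2:ℕ)) => U p) i.1 ⟨hi, Nat.zero_le _⟩ (le_rfl : U i.1 ≤ U i.1)) (hBf_mem i)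
  · intro b
    have h := hspan (0 : Fin (s+1)) b
    rw [hF0, top_inf_eq] at h
    rw [h, hBcoe]
    apply le_antisymm
    · refine iSup₂_le fun p hp => ?_
      rw [hUeq p, Submodule.span_le]
      rintro v ⟨j, rfl⟩
      refine Submodule.subset_span ⟨⟨p, j⟩, ?_, rfl⟩
      exact hp.2
    · rw [Submodule.span_le]
      rintro v ⟨i, hi, rfl⟩
      exact (le_iSup₂_of_le (f := fun (p : Fin s × Fin s) (_ : ((0 : Fin (s+1)):ℕ) ≤ (p.1:ℕ) ∧ (b:ℕ) ≤ (p.2:ℕ)) => U p) i.1 ⟨Nat.zero_le _, hi⟩ (le_rfl : U i.1 ≤ U i.1)) (hBf_mem i)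

lemma mem_jointStab_iff
    {ι : Type} [Fintype ι] [DecidableEq ι] (B : Basis ι ℂ V) (g h : ι → ℕ)
    (hg : ∀ i, g i < s) (hh : ∀ i, h i < s)
    (hFd : ∀ a : Fin (s+1), F a = Submodule.span ℂ (⇑B '' {i | (a:ℕ) ≤ g i}))
    (hF'd : ∀ b : Fin (s+1), F' b = Submodule.span ℂ (⇑B '' {i | (b:ℕ) ≤ h i}))
    (x : Module.End ℂ V) :
    x ∈ jointStab F F' ↔ ∀ i j : ι, (LinearMap.toMatrix B B) x i j ≠ 0 →
      (g j ≤ g i ∧ h j ≤ h i) := by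
  constructor
  · intro hx i j hne
    rw [LinearMap.toMatrix_apply] at hne
    constructor
    · set a : Fin (s+1) := ⟨g j, by have := hg j; omega⟩ with ha
      have hBj : B j ∈ F a := by
        rw [hFd a]
        exact Submodule.subset_span ⟨j, by show (a:ℕ) ≤ g j; exact le_rfl, rfl⟩
      have hxBj : x (B j) ∈ F a := hx.1 a (B j) hBj
      rw [hFd a, Basis.mem_span_image] at hxBj
      have : i ∈ (B.repr (x (B j))).support := Finsupp.mem_support_iff.2 hne
      exact hxBj this
    · set a : Fin (s+1) := ⟨h j, by have := hh j; omega⟩ with ha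
      have hBj : B j ∈ F' a := by
        rw [hF'd a]
        exact Submodule.subset_span ⟨j, by show (a:ℕ) ≤ h j; exact le_rfl, rfl⟩
      have hxBj : x (B j) ∈ F' a := hx.2 a (B j) hBj
      rw [hF'd a, Basis.mem_span_image] at hxBj
      have : i ∈ (B.repr (x (B j))).support := Finsupp.mem_support_iff.2 hne
      exact hxBj this
  · intro hcond
    have key : ∀ (S : Set ι), (∀ j ∈ S, ∀ i : ι, B.repr (x (B j)) i ≠ 0 → i ∈ S) →
        ∀ v ∈ Submodule.span ℂ (⇑B '' S), x v ∈ Submodule.span ℂ (⇑B '' S) := by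
      intro S hS v hv
      have hmap : Submodule.map x (Submodule.span ℂ (⇑B '' S))
          ≤ Submodule.span ℂ (⇑B '' S) := by
        rw [Submodule.map_span, Submodule.span_le]
        rintro w ⟨u, ⟨j, hj, rfl⟩, rfl⟩
        rw [← B.sum_repr (x (B j))]
        refine Submodule.sum_mem _ fun i _ => ?_
        by_cases hzero : B.repr (x (B j)) i = 0
        · rw [hzero, zero_smul]; exact Submodule.zero_mem _
        · exact Submodule.smul_mem _ _
            (Submodule.subset_span ⟨i, hS j hj i hzero, rfl⟩)
      exact hmap ⟨v, hv, rfl⟩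
    constructor
    · intro a v hv
      rw [hFd a] at hv ⊢
      refine key _ ?_ v hv
      intro j hj i hne
      have := (hcond i j (by rwa [LinearMap.toMatrix_apply])).1
      exact le_trans hj this
    · intro b v hv
      rw [hF'd b] at hv ⊢
      refine key _ ?_ v hv
      intro j hj i hne
      have := (hcond i j (by rwa [LinearMap.toMatrix_apply])).2
      exact le_trans hj this

lemma jointStab_finrank
    {ι : Type} [Fintype ι] [DecidableEq ι] (B : Basis ι ℂ V) (g h : ι → ℕ)
    (hg : ∀ i, g i < s) (hh : ∀ i, h i < s)
    (hFd : ∀ a : Fin (s+1), F a = Submodule.span ℂ (⇑B '' {i | (a:ℕ) ≤ g i}))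
    (hF'd : ∀ b : Fin (s+1), F' b = Submodule.span ℂ (⇑B '' {i | (b:ℕ) ≤ h i})) :
    finrank ℂ (jointStab F F')
      = Fintype.card {q : ι × ι // g q.2 ≤ g q.1 ∧ h q.2 ≤ h q.1} := by
  classical
  set T := {q : ι × ι // g q.2 ≤ g q.1 ∧ h q.2 ≤ h q.1} with hT
  let ψ : ↥(jointStab F F') →ₗ[ℂ] (T → ℂ) :=
    { toFun := fun x q => (LinearMap.toMatrix B B) x.1 q.1.1 q.1.2
      map_add' := by
        intro x y
        funext q
        simp [Matrix.add_apply]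
      map_smul' := by
        intro a x
        funext q
        simp [Matrix.smul_apply] }
  have hinj : Function.Injective ψ := by
    intro x y hxy
    apply Subtype.ext
    apply (LinearMap.toMatrix B B).injective
    ext i j
    by_cases hq : g j ≤ g i ∧ h j ≤ h i
    · exact congrFun hxy ⟨(i, j), hq⟩
    · have h1 : (LinearMap.toMatrix B B) x.1 i j = 0 := by
        by_contra hne
        exact hq ((mem_jointStab_iff F F' B g h hg hh hFd hF'd x.1).1 x.2 i j hne)
      have h2 : (LinearMap.toMatrix B B) y.1 i j = 0 := by
        by_contra hne
        exact hq ((mem_jointStab_iff F F' B g h hg hh hFd hF'd y.1).1 y.2 i j hne)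
      rw [h1, h2]
  have hsurj : Function.Surjective ψ := by
    intro f
    set A : Matrix ι ι ℂ :=
      Matrix.of (fun i j => if hq : (g j ≤ g i ∧ h j ≤ h i) then f ⟨(i, j), hq⟩ else 0)
      with hA
    have hx : (Matrix.toLin B B) A ∈ jointStab F F' := by
      rw [mem_jointStab_iff F F' B g h hg hh hFd hF'd]
      intro i j hne
      rw [LinearMap.toMatrix_toLin] at hne
      by_contra hq
      exact hne (by simp [hA, Matrix.of_apply, dif_neg hq])
    refine ⟨⟨(Matrix.toLin B B) A, hx⟩, ?_⟩
    funext q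
    show (LinearMap.toMatrix B B) ((Matrix.toLin B B) A) q.1.1 q.1.2 = f q
    rw [LinearMap.toMatrix_toLin]
    simp [hA, Matrix.of_apply, dif_pos q.2]
  have e : ↥(jointStab F F') ≃ₗ[ℂ] (T → ℂ) := LinearEquiv.ofBijective ψ ⟨hinj, hsurj⟩
  rw [e.finrank_eq, finrank_pi]

end Main

lemma sigma_pair_count {P : Type} [Fintype P] [DecidableEq P] (n : P → ℕ) (C : P → P → Prop)
    [∀ p p', Decidable (C p p')] :
    Fintype.card {q : ((p : P) × Fin (n p)) × ((p : P) × Fin (n p)) // C q.1.1 q.2.1}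
      = ∑ p : P, ∑ p' : P, if C p p' then n p * n p' else 0 := by
  classical
  rw [Fintype.card_subtype, Finset.card_filter, Fintype.sum_prod_type]
  rw [← Finset.univ_sigma_univ, Finset.sum_sigma]
  refine Finset.sum_congr rfl fun p _ => ?_
  dsimp only
  show (∑ _s : Fin (n p), ∑ y ∈ Finset.univ.sigma fun x => Finset.univ, if C p y.fst then 1 else 0) = _
  rw [Finset.sum_const, Finset.card_univ, Fintype.card_fin, smul_eq_mul]
  rw [Finset.sum_sigma, Finset.mul_sum]
  refine Finset.sum_congr rfl fun p' _ => ?_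
  dsimp only
  show (n p * ∑ _s : Fin (n p'), if C p p' then 1 else 0) = _
  rw [Finset.sum_const, Finset.card_univ, Fintype.card_fin, smul_eq_mul]
  by_cases hC : C p p'
  · simp [hC]
  · simp [hC]

set_option maxHeartbeats 1000000 in
/-- For a pair of flags of the same (multi-composition) type in a
`ν`-dimensional space with relative position matrix `M ∈ Θ`, the `GL(V)`-orbit
`O_M` through the pair — whose dimension is `ν²` minus the dimension of the
stabilizer — satisfies
`dim O_M = Σ m_{(i,j),(k,l)} m_{(i',j'),(k',l')}`, summed over quadruples with
`(i,j) > (i',j')` or `(k,l) > (k',l')` (lexicographically, i.e. in the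
flattened indexing, over pairs `((k,l),(k',l'))` with `k' < k` or `l' < l`). -/
theorem orbit_dimension_formula
    {V : Type} [AddCommGroup V] [Module ℂ V] [FiniteDimensional ℂ V] (ν : ℕ)
    (hdim : finrank ℂ V = ν)
    {s : ℕ} (c : Fin s → ℕ) (hc : ∑ k, c k = ν)
    (F F' : Fin (s + 1) → Submodule ℂ V)
    (hF : IsFlagOfType c F) (hF' : IsFlagOfType c F') :
    ν ^ 2 - finrank ℂ (jointStab F F')
      = ∑ q ∈ Finset.univ.filter
          (fun q : (Fin s × Fin s) × (Fin s × Fin s) =>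
            q.2.1 < q.1.1 ∨ q.2.2 < q.1.2),
          relPos F F' q.1.1 q.1.2 * relPos F F' q.2.1 q.2.2 := by
  classical
  obtain ⟨hF0, hFl, hFm, -⟩ := hF
  obtain ⟨hF'0, hF'l, hF'm, -⟩ := hF'
  subst hdim
  obtain ⟨n, B, hn, hFd, hF'd⟩ := flag_pair_basis F F' hF0 hFl hFm hF'0 hF'l hF'm
  have hdimStab := jointStab_finrank F F' B (fun i => (i.1.1 : ℕ)) (fun i => (i.1.2 : ℕ))
    (fun i => i.1.1.isLt) (fun i => i.1.2.isLt) hFd hF'd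
  set C : (Fin s × Fin s) → (Fin s × Fin s) → Prop :=
    fun p p' => ((p'.1 : ℕ) ≤ (p.1 : ℕ) ∧ (p'.2 : ℕ) ≤ (p.2 : ℕ)) with hC
  have hstab : finrank ℂ (jointStab F F')
      = ∑ p : Fin s × Fin s, ∑ p' : Fin s × Fin s, if C p p' then n p * n p' else 0 := by
    rw [hdimStab]
    exact sigma_pair_count n C
  have hν : finrank ℂ V = ∑ p : Fin s × Fin s, n p := by
    rw [Module.finrank_eq_card_basis B, Fintype.card_sigma]
    simp
  have hsq : finrank ℂ V ^ 2 = ∑ p : Fin s × Fin s, ∑ p' : Fin s × Fin s, n p * n p' := by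
    rw [hν, sq, Finset.sum_mul_sum]
  have hRHS : (∑ q ∈ Finset.univ.filter
          (fun q : (Fin s × Fin s) × (Fin s × Fin s) =>
            q.2.1 < q.1.1 ∨ q.2.2 < q.1.2),
          relPos F F' q.1.1 q.1.2 * relPos F F' q.2.1 q.2.2)
      = ∑ p : Fin s × Fin s, ∑ p' : Fin s × Fin s, if ¬ C p p' then n p * n p' else 0 := by
    rw [Finset.sum_filter]
    rw [show (∑ q : (Fin s × Fin s) × (Fin s × Fin s),
        if q.2.1 < q.1.1 ∨ q.2.2 < q.1.2 then
          relPos F F' q.1.1 q.1.2 * relPos F F' q.2.1 q.2.2 else 0)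
      = ∑ q : (Fin s × Fin s) × (Fin s × Fin s),
        if ¬ C q.1 q.2 then n q.1 * n q.2 else 0 from ?_]
    · rw [Fintype.sum_prod_type]
    · refine Fintype.sum_equiv (Equiv.prodComm _ _) _ _ fun q => ?_
      dsimp only [Equiv.prodComm_apply, Prod.fst_swap, Prod.snd_swap]
      by_cases ht : q.2.1 < q.1.1 ∨ q.2.2 < q.1.2
      · rw [if_pos ht, if_pos, ← hn q.1, ← hn q.2, mul_comm]
        · simp only [hC]
          simp only [Fin.lt_def] at ht
          omega
      · rw [if_neg ht, if_neg]
        simp only [hC]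
        simp only [Fin.lt_def] at ht
        omega
  have hsplit : (∑ p : Fin s × Fin s, ∑ p' : Fin s × Fin s, if C p p' then n p * n p' else 0)
      + (∑ p : Fin s × Fin s, ∑ p' : Fin s × Fin s, if ¬ C p p' then n p * n p' else 0)
      = ∑ p : Fin s × Fin s, ∑ p' : Fin s × Fin s, n p * n p' := by
    rw [← Finset.sum_add_distrib]
    refine Finset.sum_congr rfl fun p _ => ?_
    rw [← Finset.sum_add_distrib]
    refine Finset.sum_congr rfl fun p' _ => ?_
    by_cases hq : C p p'
    · rw [if_pos hq, if_neg (not_not_intro hq), add_zero]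
    · rw [if_neg hq, if_pos hq, zero_add]
  rw [hRHS, hstab, hsq]
  omega
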